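/- Block inverse identity used in the proof of Theorem 2: Let M, N, M̃, Ñ, X, Y, X̃, Ỹ be matrices over RatFunc ℝ of sizes M (m×m), N (p×m), M̃ (p×p), Ñ (p×m), X (m×p), Y (m×m), X̃ (m×p), Ỹ (p×p) satisfying [[Y, X],[−Ñ, M̃]] · [[M, −X̃],[N, Ỹ]] = I_{m+p}, let Q be an m×p matrix over RatFunc ℝ with X_Q := X + Q·M̃, Y_Q := Y − Q·Ñ, X̃_Q := X̃ + M·Q, Ỹ_Q := Ỹ − N·Q, and assume Y_Q^diag is invertible. Then [[M̃, Ñ],[−(Y_Q^diag)⁻¹·X_Q, (Y_Q^diag)⁻¹·Y_Q]] · [[Ỹ_Q, −N·Y_Q^diag],[X̃_Q, M·Y_Q^diag]] = I_{p+m}. -/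

import Mathlib

open Matrix

noncomputable section

/-- **Block inverse identity used in the proof of Theorem 2.** -/
theorem block_inverse_identity_thm2 {m p : ℕ}
    (M : Matrix (Fin m) (Fin m) (RatFunc ℝ)) (N : Matrix (Fin p) (Fin m) (RatFunc ℝ))
    (Mt : Matrix (Fin p) (Fin p) (RatFunc ℝ)) (Nt : Matrix (Fin p) (Fin m) (RatFunc ℝ))
    (X : Matrix (Fin m) (Fin p) (RatFunc ℝ)) (Y : Matrix (Fin m) (Fin m) (RatFunc ℝ))
    (Xt : Matrix (Fin m) (Fin p) (RatFunc ℝ)) (Yt : Matrix (Fin p) (Fin p) (RatFunc ℝ))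
    (hBez : Matrix.fromBlocks Y X (-Nt) Mt * Matrix.fromBlocks M (-Xt) N Yt = 1)
    (Q : Matrix (Fin m) (Fin p) (RatFunc ℝ))
    (XQ : Matrix (Fin m) (Fin p) (RatFunc ℝ)) (hXQ : XQ = X + Q * Mt)
    (YQ : Matrix (Fin m) (Fin m) (RatFunc ℝ)) (hYQ : YQ = Y - Q * Nt)
    (XtQ : Matrix (Fin m) (Fin p) (RatFunc ℝ)) (hXtQ : XtQ = Xt + M * Q)
    (YtQ : Matrix (Fin p) (Fin p) (RatFunc ℝ)) (hYtQ : YtQ = Yt - N * Q)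
    (Ydiag : Matrix (Fin m) (Fin m) (RatFunc ℝ))
    (hYdiag : Ydiag = Matrix.diagonal fun i => YQ i i)
    (hYdiagInv : IsUnit Ydiag) :
    Matrix.fromBlocks Mt Nt (-(Ydiag⁻¹ * XQ)) (Ydiag⁻¹ * YQ) *
      Matrix.fromBlocks YtQ (-(N * Ydiag)) XtQ (M * Ydiag) = 1 := by
  have hDinv : Ydiag⁻¹ * Ydiag = 1 :=
    Matrix.nonsing_inv_mul _ ((Matrix.isUnit_iff_isUnit_det _).mp hYdiagInv)
  -- Step 1: the Q-shifted Bezout identity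
  have hFQ : Matrix.fromBlocks YQ XQ (-Nt) Mt =
      Matrix.fromBlocks (1 : Matrix (Fin m) (Fin m) _) Q 0 1 *
        Matrix.fromBlocks Y X (-Nt) Mt := by
    rw [Matrix.fromBlocks_multiply]
    subst hXQ hYQ
    congr 1 <;> simp [sub_eq_add_neg, Matrix.mul_neg]
  have hGQ' : Matrix.fromBlocks M (-XtQ) N YtQ =
      Matrix.fromBlocks M (-Xt) N Yt *
        Matrix.fromBlocks (1 : Matrix (Fin m) (Fin m) _) (-Q) 0 1 := by
    rw [Matrix.fromBlocks_multiply]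
    subst hXtQ hYtQ
    congr 1 <;> simp [sub_eq_add_neg, Matrix.mul_neg, neg_add, add_comm]
  have hUU : Matrix.fromBlocks (1 : Matrix (Fin m) (Fin m) (RatFunc ℝ)) Q
        (0 : Matrix (Fin p) (Fin m) (RatFunc ℝ)) (1 : Matrix (Fin p) (Fin p) (RatFunc ℝ)) *
      Matrix.fromBlocks (1 : Matrix (Fin m) (Fin m) (RatFunc ℝ)) (-Q)
        (0 : Matrix (Fin p) (Fin m) (RatFunc ℝ)) (1 : Matrix (Fin p) (Fin p) (RatFunc ℝ)) = 1 := by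
    rw [Matrix.fromBlocks_multiply]
    simp [← Matrix.fromBlocks_one]
  have key : Matrix.fromBlocks YQ XQ (-Nt) Mt * Matrix.fromBlocks M (-XtQ) N YtQ = 1 := by
    rw [hFQ, hGQ', Matrix.mul_assoc, ← Matrix.mul_assoc (Matrix.fromBlocks Y X (-Nt) Mt),
      hBez, Matrix.one_mul, hUU]
  -- Step 2: express the goal factors via the shifted ones
  have hL : Matrix.fromBlocks Mt Nt (-(Ydiag⁻¹ * XQ)) (Ydiag⁻¹ * YQ) =
      Matrix.fromBlocks (0 : Matrix (Fin p) (Fin m) _) (-1 : Matrix (Fin p) (Fin p) (RatFunc ℝ)) Ydiag⁻¹ 0 *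
        ((Matrix.fromBlocks YQ XQ (-Nt) Mt *
          Matrix.fromBlocks (0 : Matrix (Fin m) (Fin p) _) (1 : Matrix (Fin m) (Fin m) (RatFunc ℝ))
            (-1 : Matrix (Fin p) (Fin p) (RatFunc ℝ)) 0 :
              Matrix (Fin m ⊕ Fin p) (Fin p ⊕ Fin m) (RatFunc ℝ))) := by
    rw [Matrix.fromBlocks_multiply, Matrix.fromBlocks_multiply]
    congr 1 <;> simp [Matrix.mul_neg, Matrix.neg_mul]
  have hR : Matrix.fromBlocks YtQ (-(N * Ydiag)) XtQ (M * Ydiag) =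
      Matrix.fromBlocks (0 : Matrix (Fin p) (Fin m) _) (-1 : Matrix (Fin p) (Fin p) (RatFunc ℝ))
          (1 : Matrix (Fin m) (Fin m) (RatFunc ℝ)) 0 *
        ((Matrix.fromBlocks M (-XtQ) N YtQ *
          Matrix.fromBlocks (0 : Matrix (Fin m) (Fin p) _) Ydiag (-1 : Matrix (Fin p) (Fin p) (RatFunc ℝ)) 0 :
              Matrix (Fin m ⊕ Fin p) (Fin p ⊕ Fin m) (RatFunc ℝ))) := by
    rw [Matrix.fromBlocks_multiply, Matrix.fromBlocks_multiply]
    congr 1 <;> simp [Matrix.mul_neg, Matrix.neg_mul]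
  have hσ : Matrix.fromBlocks (0 : Matrix (Fin m) (Fin p) (RatFunc ℝ))
        (1 : Matrix (Fin m) (Fin m) (RatFunc ℝ)) (-1 : Matrix (Fin p) (Fin p) (RatFunc ℝ))
        (0 : Matrix (Fin p) (Fin m) (RatFunc ℝ)) *
      Matrix.fromBlocks (0 : Matrix (Fin p) (Fin m) (RatFunc ℝ))
        (-1 : Matrix (Fin p) (Fin p) (RatFunc ℝ)) (1 : Matrix (Fin m) (Fin m) (RatFunc ℝ))
        (0 : Matrix (Fin m) (Fin p) (RatFunc ℝ)) = 1 := by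
    rw [Matrix.fromBlocks_multiply]
    simp [← Matrix.fromBlocks_one]
  have hT : Matrix.fromBlocks (0 : Matrix (Fin p) (Fin m) (RatFunc ℝ))
        (-1 : Matrix (Fin p) (Fin p) (RatFunc ℝ)) Ydiag⁻¹ (0 : Matrix (Fin m) (Fin p) (RatFunc ℝ)) *
      Matrix.fromBlocks (0 : Matrix (Fin m) (Fin p) (RatFunc ℝ)) Ydiag
        (-1 : Matrix (Fin p) (Fin p) (RatFunc ℝ)) (0 : Matrix (Fin p) (Fin m) (RatFunc ℝ)) = 1 := by
    rw [Matrix.fromBlocks_multiply]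
    simp [← Matrix.fromBlocks_one, hDinv]
  rw [hL, hR]
  simp only [Matrix.mul_assoc]
  rw [← Matrix.mul_assoc (Matrix.fromBlocks 0 1 (-1) 0) (Matrix.fromBlocks 0 (-1) 1 0), hσ,
    Matrix.one_mul, ← Matrix.mul_assoc (Matrix.fromBlocks YQ XQ (-Nt) Mt), key,
    Matrix.one_mul, hT]
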